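/- Let (ω, α) be a Jacobi sequence satisfying lim_{n→∞} ω n / ω(n−1) = 1 and lim_{n→∞} (α n − α(n−1))/√(ω n + ω(n−1)) = c for some real number c, and let X be its Jacobi matrix. Then for all integers m and n, the matrix coefficient ⟨X^{(k)} e_{k+m}, e_{k+n}⟩ of the normalized operator X^{(k)} = (X − α k)/√(ω k + ω(k−1)) converges as k → ∞ to: 1/√2 if m = n − 1, c·n if m = n, 1/√2 if m = n + 1, and 0 if |m − n| ≥ 2. -/

import Mathlib

open Filter

/-- The Jacobi matrix of a Jacobi sequence `(ω, α)`, acting on finitely supported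
real sequences indexed by `ℕ`:
`X e_n = √(ω n)·e_{n+1} + α n·e_n + √(ω (n-1))·e_{n-1}`, last term omitted for `n = 0`. -/
noncomputable def jacobiOp (ω α : ℕ → ℝ) : (ℕ →₀ ℝ) →ₗ[ℝ] (ℕ →₀ ℝ) :=
  Finsupp.lsum ℝ fun n => LinearMap.toSpanSingleton ℝ (ℕ →₀ ℝ)
    (Real.sqrt (ω n) • Finsupp.single (n + 1) 1 + α n • Finsupp.single n 1 +
      if n = 0 then 0 else Real.sqrt (ω (n - 1)) • Finsupp.single (n - 1) 1)

/-- The matrix coefficient `⟨T e_j, e_l⟩` for integer indices, taken to be `0` when an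
index is negative. -/
noncomputable def matrixCoeff (T : (ℕ →₀ ℝ) →ₗ[ℝ] (ℕ →₀ ℝ)) (j l : ℤ) : ℝ :=
  if 0 ≤ j ∧ 0 ≤ l then (T (Finsupp.single j.toNat 1)) l.toNat else 0

section Helpers

variable (ω α : ℕ → ℝ) (hω : ∀ n, 0 < ω n)

/-- inner map to atTop -/
lemma toNat_shift_atTop (d : ℤ) :
    Tendsto (fun k : ℕ => ((k : ℤ) + d).toNat) atTop atTop :=
  tendsto_atTop.mpr fun b => eventually_atTop.mpr ⟨b + (-d).toNat, fun k hk => by omega⟩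

lemma ratio_step (h1 : Tendsto (fun n : ℕ => ω n / ω (n - 1)) atTop (nhds 1)) (d : ℤ) :
    Tendsto (fun k : ℕ => ω ((k : ℤ) + d + 1).toNat / ω ((k : ℤ) + d).toNat) atTop (nhds 1) := by
  have hbase : Tendsto (fun k : ℕ => ω (k + 1) / ω k) atTop (nhds 1) := by
    have := h1.comp (tendsto_add_atTop_nat 1)
    simpa [Function.comp_def] using this
  have := hbase.comp (toNat_shift_atTop d)
  refine this.congr' ?_
  filter_upwards [eventually_ge_atTop (-d).toNat] with k hk
  have : ((k : ℤ) + d).toNat + 1 = ((k : ℤ) + d + 1).toNat := by omega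
  simp [Function.comp, this]

lemma ratio_tendsto (hω : ∀ n, 0 < ω n) (h1 : Tendsto (fun n : ℕ => ω n / ω (n - 1)) atTop (nhds 1)) (s t : ℤ) :
    Tendsto (fun k : ℕ => ω ((k : ℤ) + s).toNat / ω ((k : ℤ) + t).toNat) atTop (nhds 1) := by
  have key : ∀ d : ℤ, Tendsto (fun k : ℕ => ω ((k : ℤ) + (t + d)).toNat / ω ((k : ℤ) + t).toNat)
      atTop (nhds 1) := by
    intro d
    induction d using Int.induction_on with
    | zero =>
      have he : (fun k : ℕ => ω ((k : ℤ) + (t + 0)).toNat / ω ((k : ℤ) + t).toNat)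
          = fun _ => (1 : ℝ) := by
        funext k; rw [add_zero]; exact div_self (hω _).ne'
      rw [he]; exact tendsto_const_nhds
    | succ d ih =>
      have h := (ratio_step ω h1 (t + d)).mul ih
      rw [mul_one] at h
      refine h.congr fun k => ?_
      have e1 : ((k : ℤ) + (t + d) + 1).toNat = ((k : ℤ) + (t + (d + 1))).toNat := by omega
      have e2 : ((k : ℤ) + (t + d)).toNat = ((k : ℤ) + (t + (d : ℤ))).toNat := by omega
      rw [e1, e2, div_mul_div_cancel₀]
      exact (hω _).ne'
    | pred d ih =>
      have h := ih.div (ratio_step ω h1 (t + (-d - 1))) one_ne_zero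
      rw [div_one] at h
      refine h.congr fun k => ?_
      have e1 : ((k : ℤ) + (t + (-d - 1)) + 1).toNat = ((k : ℤ) + (t + -(d : ℤ))).toNat := by omega
      have e2 : ((k : ℤ) + (t + (-d - 1))).toNat = ((k : ℤ) + (t + (-(d : ℤ) - 1))).toNat := by
        omega
      simp only [Pi.div_apply]
      rw [e1, e2]
      have hA := (hω ((k : ℤ) + (t + -(d : ℤ))).toNat).ne'
      have hB := (hω ((k : ℤ) + t).toNat).ne'
      have hD := (hω ((k : ℤ) + (t + (-(d : ℤ) - 1))).toNat).ne'
      field_simp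
  have := key (s - t)
  refine this.congr fun k => ?_
  congr 2 <;> omega

end Helpers

section Helpers2
variable (ω α : ℕ → ℝ)

lemma sqrt_ratio_tendsto (hω : ∀ n, 0 < ω n)
    (h1 : Tendsto (fun n : ℕ => ω n / ω (n - 1)) atTop (nhds 1)) (s t u v : ℤ) :
    Tendsto (fun k : ℕ => Real.sqrt (ω ((k : ℤ) + s).toNat + ω ((k : ℤ) + t).toNat) /
      Real.sqrt (ω ((k : ℤ) + u).toNat + ω ((k : ℤ) + v).toNat)) atTop (nhds 1) := by
  have hr : Tendsto (fun k : ℕ => (ω ((k : ℤ) + s).toNat + ω ((k : ℤ) + t).toNat) /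
      (ω ((k : ℤ) + u).toNat + ω ((k : ℤ) + v).toNat)) atTop (nhds 1) := by
    have h := ((ratio_tendsto ω hω h1 s u).add (ratio_tendsto ω hω h1 t u)).div
      ((tendsto_const_nhds.add (ratio_tendsto ω hω h1 v u)) :
        Tendsto (fun k : ℕ => 1 + ω ((k : ℤ) + v).toNat / ω ((k : ℤ) + u).toNat)
          atTop (nhds (1 + 1))) (by norm_num)
    norm_num at h
    refine h.congr fun k => ?_
    have hu := (hω ((k : ℤ) + u).toNat).ne'
    have hden : ω ((k : ℤ) + u).toNat + ω ((k : ℤ) + v).toNat ≠ 0 :=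
      (add_pos (hω _) (hω _)).ne'
    simp only [Pi.div_apply]
    field_simp
  have := (Real.continuous_sqrt.tendsto 1).comp hr
  rw [Real.sqrt_one] at this
  refine this.congr fun k => ?_
  simp only [Function.comp]
  rw [Real.sqrt_div (add_pos (hω _) (hω _)).le]

lemma sqrt_single_ratio_tendsto (hω : ∀ n, 0 < ω n)
    (h1 : Tendsto (fun n : ℕ => ω n / ω (n - 1)) atTop (nhds 1)) (s u v : ℤ) :
    Tendsto (fun k : ℕ => Real.sqrt (ω ((k : ℤ) + s).toNat) /
      Real.sqrt (ω ((k : ℤ) + u).toNat + ω ((k : ℤ) + v).toNat)) atTop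
      (nhds (1 / Real.sqrt 2)) := by
  have hr : Tendsto (fun k : ℕ => ω ((k : ℤ) + s).toNat /
      (ω ((k : ℤ) + u).toNat + ω ((k : ℤ) + v).toNat)) atTop (nhds (1 / 2)) := by
    have h := (ratio_tendsto ω hω h1 s u).div
      ((tendsto_const_nhds.add (ratio_tendsto ω hω h1 v u)) :
        Tendsto (fun k : ℕ => 1 + ω ((k : ℤ) + v).toNat / ω ((k : ℤ) + u).toNat)
          atTop (nhds (1 + 1))) (by norm_num)
    norm_num at h
    refine h.congr fun k => ?_
    have hu := (hω ((k : ℤ) + u).toNat).ne'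
    have hden : ω ((k : ℤ) + u).toNat + ω ((k : ℤ) + v).toNat ≠ 0 :=
      (add_pos (hω _) (hω _)).ne'
    simp only [Pi.div_apply]
    field_simp
  have := (Real.continuous_sqrt.tendsto (1 / 2)).comp hr
  have e : Real.sqrt (1 / 2) = 1 / Real.sqrt 2 := by
    rw [Real.sqrt_div (by norm_num : (0:ℝ) ≤ 1), Real.sqrt_one]
  rw [e] at this
  refine this.congr fun k => ?_
  simp only [Function.comp]
  rw [Real.sqrt_div (hω _).le]

lemma alpha_step (h2 : Tendsto (fun n : ℕ => (α n - α (n - 1)) / Real.sqrt (ω n + ω (n - 1)))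
      atTop (nhds c)) (s : ℤ) :
    Tendsto (fun k : ℕ => (α ((k : ℤ) + s).toNat - α ((k : ℤ) + s - 1).toNat) /
      Real.sqrt (ω ((k : ℤ) + s).toNat + ω ((k : ℤ) + s - 1).toNat)) atTop (nhds c) := by
  have := h2.comp (toNat_shift_atTop s)
  refine this.congr' ?_
  filter_upwards [eventually_ge_atTop ((1 - s).toNat)] with k hk
  have e : ((k : ℤ) + s).toNat - 1 = ((k : ℤ) + s - 1).toNat := by omega
  simp only [Function.comp, e]

end Helpers2

lemma alpha_diag (ω α : ℕ → ℝ) (c : ℝ) (hω : ∀ n, 0 < ω n)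
    (h1 : Tendsto (fun n : ℕ => ω n / ω (n - 1)) atTop (nhds 1))
    (h2 : Tendsto (fun n : ℕ => (α n - α (n - 1)) / Real.sqrt (ω n + ω (n - 1)))
      atTop (nhds c)) (n : ℤ) :
    Tendsto (fun k : ℕ => (α ((k : ℤ) + n).toNat - α k) /
      Real.sqrt (ω ((k : ℤ) + (0 : ℤ)).toNat + ω ((k : ℤ) + (-1 : ℤ)).toNat)) atTop
      (nhds (c * n)) := by
  induction n using Int.induction_on with
  | zero =>
    have he : (fun k : ℕ => (α ((k : ℤ) + (0:ℤ)).toNat - α k) /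
        Real.sqrt (ω ((k : ℤ) + (0 : ℤ)).toNat + ω ((k : ℤ) + (-1 : ℤ)).toNat))
        = fun _ => (0 : ℝ) := by
      funext k; simp
    rw [he]
    simpa using tendsto_const_nhds
  | succ d ih =>
    have h := ((alpha_step ω α h2 ((d : ℤ) + 1)).mul
        (sqrt_ratio_tendsto ω hω h1 ((d : ℤ) + 1) d 0 (-1))).add ih
    rw [mul_one] at h
    have h' : Tendsto (fun k : ℕ => (α ((k : ℤ) + ((d : ℤ) + 1)).toNat - α k) /
        Real.sqrt (ω ((k : ℤ) + (0 : ℤ)).toNat + ω ((k : ℤ) + (-1 : ℤ)).toNat)) atTop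
        (nhds (c + c * d)) := by
      refine h.congr fun k => ?_
      have e : ((k : ℤ) + ((d : ℤ) + 1) - 1).toNat = ((k : ℤ) + (d : ℤ)).toNat := by omega
      rw [e]
      have hS1 : Real.sqrt (ω ((k : ℤ) + ((d : ℤ) + 1)).toNat + ω ((k : ℤ) + (d : ℤ)).toNat)
          ≠ 0 := (Real.sqrt_pos.mpr (add_pos (hω _) (hω _))).ne'
      have hD : Real.sqrt (ω ((k : ℤ) + (0 : ℤ)).toNat + ω ((k : ℤ) + (-1 : ℤ)).toNat)
          ≠ 0 := (Real.sqrt_pos.mpr (add_pos (hω _) (hω _))).ne'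
      field_simp
      ring
    have : (c : ℝ) + c * d = c * (((d : ℤ) + 1 : ℤ) : ℝ) := by push_cast; ring
    rw [this] at h'
    exact h'
  | pred d ih =>
    have h := ih.sub ((alpha_step ω α h2 (-(d : ℤ))).mul
        (sqrt_ratio_tendsto ω hω h1 (-(d : ℤ)) (-(d : ℤ) - 1) 0 (-1)))
    rw [mul_one] at h
    have h' : Tendsto (fun k : ℕ => (α ((k : ℤ) + (-(d : ℤ) - 1)).toNat - α k) /
        Real.sqrt (ω ((k : ℤ) + (0 : ℤ)).toNat + ω ((k : ℤ) + (-1 : ℤ)).toNat)) atTop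
        (nhds (c * ↑(-(d : ℤ)) - c)) := by
      refine h.congr fun k => ?_
      have e : ((k : ℤ) + -(d : ℤ) - 1).toNat = ((k : ℤ) + (-(d : ℤ) - 1)).toNat := by omega
      rw [e]
      have hS1 : Real.sqrt (ω ((k : ℤ) + -(d : ℤ)).toNat + ω ((k : ℤ) + (-(d : ℤ) - 1)).toNat)
          ≠ 0 := (Real.sqrt_pos.mpr (add_pos (hω _) (hω _))).ne'
      have hD : Real.sqrt (ω ((k : ℤ) + (0 : ℤ)).toNat + ω ((k : ℤ) + (-1 : ℤ)).toNat)
          ≠ 0 := (Real.sqrt_pos.mpr (add_pos (hω _) (hω _))).ne'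
      field_simp
      ring
    have : c * ((-(d : ℤ) : ℤ) : ℝ) - c = c * ((-(d : ℤ) - 1 : ℤ) : ℝ) := by push_cast; ring
    rw [this] at h'
    exact h'

lemma entry_eq (ω α : ℕ → ℝ) (k j l : ℕ) (hj : j ≠ 0) (r : ℝ) :
    ((r • (jacobiOp ω α - α k • (1 : (ℕ →₀ ℝ) →ₗ[ℝ] (ℕ →₀ ℝ)))) (Finsupp.single j 1)) l
    = r * (Real.sqrt (ω j) * (if j + 1 = l then 1 else 0)
        + (α j - α k) * (if j = l then 1 else 0)
        + Real.sqrt (ω (j - 1)) * (if j - 1 = l then 1 else 0)) := by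
  simp only [LinearMap.smul_apply, LinearMap.sub_apply, Module.End.one_apply,
    LinearMap.smul_apply, jacobiOp, Finsupp.lsum_single, LinearMap.toSpanSingleton_apply,
    one_smul, if_neg hj, Finsupp.smul_apply, Finsupp.sub_apply, Finsupp.add_apply,
    Finsupp.single_apply, smul_eq_mul]
  ring

/-- Under (RAC2), the matrix coefficients `⟨X^{(k)} e_{k+m}, e_{k+n}⟩` of the normalized
operator `X^{(k)} = (X − α k)/√(ω k + ω (k−1))` converge: to `1/√2` on the off-diagonals
`m = n ∓ 1`, to `c·n` on the diagonal, and to `0` elsewhere. -/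
theorem RAC2_matrix_coefficient_limit (ω α : ℕ → ℝ) (hω : ∀ n, 0 < ω n) (c : ℝ)
    (h1 : Tendsto (fun n : ℕ => ω n / ω (n - 1)) atTop (nhds 1))
    (h2 : Tendsto (fun n : ℕ => (α n - α (n - 1)) / Real.sqrt (ω n + ω (n - 1)))
      atTop (nhds c))
    (m n : ℤ) :
    Tendsto
      (fun k : ℕ =>
        matrixCoeff
          ((1 / Real.sqrt (ω k + ω (k - 1))) •
            (jacobiOp ω α - α k • (1 : (ℕ →₀ ℝ) →ₗ[ℝ] (ℕ →₀ ℝ))))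
          ((k : ℤ) + m) ((k : ℤ) + n))
      atTop
      (nhds
        (if m = n - 1 then 1 / Real.sqrt 2
         else if m = n then c * n
         else if m = n + 1 then 1 / Real.sqrt 2
         else 0)) := by
  have hev : ∀ f : ℕ → ℝ,
      (∀ k : ℕ, k ≥ m.natAbs + n.natAbs + 2 →
        f k = matrixCoeff
          ((1 / Real.sqrt (ω k + ω (k - 1))) •
            (jacobiOp ω α - α k • (1 : (ℕ →₀ ℝ) →ₗ[ℝ] (ℕ →₀ ℝ))))
          ((k : ℤ) + m) ((k : ℤ) + n)) →
      ∀ L : ℝ, Tendsto f atTop (nhds L) →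
      Tendsto (fun k : ℕ =>
        matrixCoeff
          ((1 / Real.sqrt (ω k + ω (k - 1))) •
            (jacobiOp ω α - α k • (1 : (ℕ →₀ ℝ) →ₗ[ℝ] (ℕ →₀ ℝ))))
          ((k : ℤ) + m) ((k : ℤ) + n)) atTop (nhds L) := by
    intro f hf L hL
    refine hL.congr' ?_
    filter_upwards [eventually_ge_atTop (m.natAbs + n.natAbs + 2)] with k hk
    exact hf k hk
  -- generic entry computation for large k
  have hentry : ∀ k : ℕ, k ≥ m.natAbs + n.natAbs + 2 →
      matrixCoeff
          ((1 / Real.sqrt (ω k + ω (k - 1))) •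
            (jacobiOp ω α - α k • (1 : (ℕ →₀ ℝ) →ₗ[ℝ] (ℕ →₀ ℝ))))
          ((k : ℤ) + m) ((k : ℤ) + n)
      = (1 / Real.sqrt (ω ((k : ℤ) + (0:ℤ)).toNat + ω ((k : ℤ) + (-1:ℤ)).toNat)) *
          (Real.sqrt (ω (((k : ℤ) + m).toNat)) *
              (if ((k : ℤ) + m).toNat + 1 = ((k : ℤ) + n).toNat then 1 else 0)
            + (α (((k : ℤ) + m).toNat) - α k) *
              (if ((k : ℤ) + m).toNat = ((k : ℤ) + n).toNat then 1 else 0)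
            + Real.sqrt (ω (((k : ℤ) + m).toNat - 1)) *
              (if ((k : ℤ) + m).toNat - 1 = ((k : ℤ) + n).toNat then 1 else 0)) := by
    intro k hk
    have hm0 : (0:ℤ) ≤ (k : ℤ) + m := by omega
    have hn0 : (0:ℤ) ≤ (k : ℤ) + n := by omega
    have hj : ((k : ℤ) + m).toNat ≠ 0 := by omega
    rw [matrixCoeff, if_pos ⟨hm0, hn0⟩, entry_eq ω α k _ _ hj]
    have e0 : ((k : ℤ) + (0:ℤ)).toNat = k := by omega
    have e1 : ((k : ℤ) + (-1:ℤ)).toNat = k - 1 := by omega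
    rw [e0, e1]
  rcases eq_or_ne m (n - 1) with hmn | hmn
  · rw [if_pos hmn]
    refine hev _ ?_ _ (sqrt_single_ratio_tendsto ω hω h1 m 0 (-1))
    intro k hk
    rw [hentry k hk]
    have c1 : ((k : ℤ) + m).toNat + 1 = ((k : ℤ) + n).toNat := by omega
    have c2 : ((k : ℤ) + m).toNat ≠ ((k : ℤ) + n).toNat := by omega
    have c3 : ((k : ℤ) + m).toNat - 1 ≠ ((k : ℤ) + n).toNat := by omega
    rw [if_pos c1, if_neg c2, if_neg c3]
    ring
  · rcases eq_or_ne m n with hmn2 | hmn2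
    · rw [if_neg hmn, if_pos hmn2]
      subst hmn2
      refine hev _ ?_ _ (alpha_diag ω α c hω h1 h2 m)
      intro k hk
      rw [hentry k hk]
      have c1 : ((k : ℤ) + m).toNat + 1 ≠ ((k : ℤ) + m).toNat := by omega
      have c3 : ((k : ℤ) + m).toNat - 1 ≠ ((k : ℤ) + m).toNat := by omega
      rw [if_pos rfl, if_neg c1, if_neg c3]
      ring
    · rcases eq_or_ne m (n + 1) with hmn3 | hmn3
      · rw [if_neg hmn, if_neg hmn2, if_pos hmn3]
        refine hev _ ?_ _ (sqrt_single_ratio_tendsto ω hω h1 n 0 (-1))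
        intro k hk
        rw [hentry k hk]
        have c1 : ((k : ℤ) + m).toNat + 1 ≠ ((k : ℤ) + n).toNat := by omega
        have c2 : ((k : ℤ) + m).toNat ≠ ((k : ℤ) + n).toNat := by omega
        have c3 : ((k : ℤ) + m).toNat - 1 = ((k : ℤ) + n).toNat := by omega
        have c4 : ((k : ℤ) + m).toNat - 1 = ((k : ℤ) + n).toNat := c3
        rw [if_neg c1, if_neg c2, if_pos c3]
        have e : ((k : ℤ) + m).toNat - 1 = ((k : ℤ) + n).toNat := c3
        rw [e]
        ring
      · rw [if_neg hmn, if_neg hmn2, if_neg hmn3]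
        refine hev _ ?_ _ (tendsto_const_nhds : Tendsto (fun _ : ℕ => (0:ℝ)) atTop (nhds 0))
        intro k hk
        rw [hentry k hk]
        have c1 : ((k : ℤ) + m).toNat + 1 ≠ ((k : ℤ) + n).toNat := by omega
        have c2 : ((k : ℤ) + m).toNat ≠ ((k : ℤ) + n).toNat := by omega
        have c3 : ((k : ℤ) + m).toNat - 1 ≠ ((k : ℤ) + n).toNat := by omega
        rw [if_neg c1, if_neg c2, if_neg c3]
        ring
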